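/- Let μ, ν, ρ be Borel probability measures on ℝ with μ and ν compactly supported, and suppose ν is not a Dirac mass. Assume there exists a probability measure π̄ on ℝ³ with first marginal μ, second marginal ν, satisfying the martingale property ∫ (y−x) dπ̄_{y,z|x}(y,z) = 0 for μ-a.e. x, and such that dπ̄/d(μ⊗ν⊗ρ) = exp(−p) for a (μ⊗ν⊗ρ)-essentially bounded function p. Then sup(supp μ) < sup(supp ν) and inf(supp μ) > inf(supp ν). -/

import Mathlib

open MeasureTheory Filter Set

/-- Topological support of a Borel measure on ℝ. -/
noncomputable def msupp (ν : Measure ℝ) : Set ℝ := {x | ∀ U ∈ nhds x, 0 < ν U}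

lemma msupp_closed (m : Measure ℝ) : IsClosed (msupp m) := by
  rw [← isOpen_compl_iff, isOpen_iff_mem_nhds]
  intro x hx
  simp only [msupp, mem_compl_iff, mem_setOf_eq, not_forall] at hx
  obtain ⟨U, hU, hU0⟩ := hx
  rw [not_lt, nonpos_iff_eq_zero] at hU0
  refine Filter.mem_of_superset (interior_mem_nhds.2 hU) ?_
  intro y hy
  simp only [msupp, mem_compl_iff, mem_setOf_eq, not_forall]
  refine ⟨interior U, isOpen_interior.mem_nhds hy, ?_⟩
  rw [not_lt, nonpos_iff_eq_zero]
  exact measure_mono_null interior_subset hU0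

lemma msupp_compl_null (m : Measure ℝ) : m (msupp m)ᶜ = 0 := by
  refine measure_null_of_locally_null _ (fun x hx => ?_)
  simp only [msupp, mem_compl_iff, mem_setOf_eq, not_forall] at hx
  obtain ⟨U, hU, hU0⟩ := hx
  rw [not_lt, nonpos_iff_eq_zero] at hU0
  exact ⟨U, nhdsWithin_le_nhds hU, hU0⟩

lemma ae_mem_msupp (m : Measure ℝ) : ∀ᵐ x ∂m, x ∈ msupp m := by
  rw [ae_iff]
  exact msupp_compl_null m

lemma msupp_nonempty (m : Measure ℝ) [IsProbabilityMeasure m] : (msupp m).Nonempty := by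
  by_contra h
  rw [not_nonempty_iff_eq_empty] at h
  have := msupp_compl_null m
  rw [h, compl_empty] at this
  simp at this

/-- Core lemma: derives a contradiction from the martingale property together with
a favorable drift estimate on a set of positive measure. -/
lemma core_contradiction
    (μ ν ρ : Measure ℝ)
    [IsProbabilityMeasure μ] [IsProbabilityMeasure ν] [IsProbabilityMeasure ρ]
    (pbar : ℝ × ℝ × ℝ → ℝ) (Cp : ℝ)
    (hpb : ∀ᵐ q ∂(μ.prod (ν.prod ρ)), |pbar q| ≤ Cp)
    (πbar : Measure (ℝ × ℝ × ℝ)) [IsProbabilityMeasure πbar]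
    (hπbar : πbar = (μ.prod (ν.prod ρ)).withDensity
        (fun q => ENNReal.ofReal (Real.exp (-pbar q))))
    (hπbarX : πbar.map Prod.fst = μ)
    (hπbarM : ∀ᵐ x ∂μ, ∫ q : ℝ × ℝ, (q.1 - x) ∂(πbar.condKernel x) = 0)
    (M : ℝ) (hM : ∀ᵐ q ∂πbar, |q.2.1 - q.1| ≤ M)
    (S T : Set ℝ) (hS : MeasurableSet S) (hT : MeasurableSet T)
    (σ δ ε : ℝ) (hσ : |σ| = 1) (hε : 0 < ε)
    (hbound : ∀ᵐ q ∂πbar, q.1 ∈ S →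
      σ * (q.2.1 - q.1) ≤ δ - ε * T.indicator (fun _ => (1:ℝ)) q.2.1)
    (hμS : 0 < μ S) (hδε : δ < ε * Real.exp (-Cp) * (ν T).toReal) : False := by
  have hfst : πbar.fst = μ := hπbarX
  set U : Set (ℝ × ℝ × ℝ) := Prod.fst ⁻¹' S with hU
  set V : Set (ℝ × ℝ × ℝ) := (fun q : ℝ × ℝ × ℝ => q.2.1) ⁻¹' T with hV
  have hUm : MeasurableSet U := measurable_fst hS
  have hVm : MeasurableSet V := (measurable_fst.comp measurable_snd) hT
  set f : ℝ × ℝ × ℝ → ℝ := U.indicator (fun q => σ * (q.2.1 - q.1)) with hf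
  -- integrability of f
  have hM0 : 0 ≤ M := by
    obtain ⟨q, hq⟩ := hM.exists
    exact le_trans (abs_nonneg _) hq
  have hfm : Measurable f :=
    (measurable_const.mul ((measurable_fst.comp measurable_snd).sub measurable_fst)).indicator hUm
  have hfi : Integrable f πbar := by
    refine Integrable.mono' (integrable_const M) hfm.aestronglyMeasurable ?_
    filter_upwards [hM] with q hq
    rw [Real.norm_eq_abs, hf]
    by_cases hqU : q ∈ U
    · rw [Set.indicator_of_mem hqU, abs_mul, hσ, one_mul]; exact hq
    · rw [Set.indicator_of_notMem hqU]; simpa using hM0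
  -- the martingale property forces ∫ f = 0
  have hint0 : ∫ q, f q ∂πbar = 0 := by
    rw [← Measure.integral_condKernel hfi, hfst]
    refine integral_eq_zero_of_ae ?_
    filter_upwards [hπbarM] with x hx
    by_cases hxS : x ∈ S
    · have heq : ∀ ω : ℝ × ℝ, f (x, ω) = σ * (ω.1 - x) := fun ω =>
        Set.indicator_of_mem (by simpa [hU] using hxS) _
      simp only [heq]
      rw [integral_const_mul, hx, mul_zero]
      simp
    · have heq : ∀ ω : ℝ × ℝ, f (x, ω) = 0 := fun ω =>
        Set.indicator_of_notMem (by simpa [hU] using hxS) _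
      simp [heq]
  -- comparison function
  set h : ℝ × ℝ × ℝ → ℝ := fun q =>
    δ * U.indicator (fun _ => (1:ℝ)) q - ε * (U ∩ V).indicator (fun _ => (1:ℝ)) q with hh
  have hhi : Integrable h πbar := by
    refine Integrable.sub ?_ ?_
    · exact ((integrable_const (1:ℝ)).indicator hUm).const_mul δ
    · exact ((integrable_const (1:ℝ)).indicator (hUm.inter hVm)).const_mul ε
  have hfh : f ≤ᵐ[πbar] h := by
    filter_upwards [hbound] with q hq
    by_cases hqU : q ∈ U
    · have h1 : f q = σ * (q.2.1 - q.1) := Set.indicator_of_mem hqU _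
      have h2 : U.indicator (fun _ => (1:ℝ)) q = 1 := Set.indicator_of_mem hqU _
      have h3 : (U ∩ V).indicator (fun _ => (1:ℝ)) q = T.indicator (fun _ => (1:ℝ)) q.2.1 := by
        by_cases hqV : q ∈ V
        · rw [Set.indicator_of_mem (Set.mem_inter hqU hqV) _,
            Set.indicator_of_mem (show q.2.1 ∈ T from hqV) _]
        · rw [Set.indicator_of_notMem (fun hc => hqV hc.2) _,
            Set.indicator_of_notMem (show q.2.1 ∉ T from hqV) _]
      have hq' := hq hqU
      simp only [hh, h1, h2, h3, mul_one]
      linarith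
    · have h1 : f q = 0 := Set.indicator_of_notMem hqU _
      have h2 : U.indicator (fun _ => (1:ℝ)) q = 0 := Set.indicator_of_notMem hqU _
      have h3 : (U ∩ V).indicator (fun _ => (1:ℝ)) q = 0 :=
        Set.indicator_of_notMem (fun hc => hqU hc.1) _
      simp [hh, h1, h2, h3]
  have hle : (0:ℝ) ≤ δ * (πbar U).toReal - ε * (πbar (U ∩ V)).toReal := by
    have := integral_mono_ae hfi hhi hfh
    rw [hint0] at this
    refine le_trans this (le_of_eq ?_)
    rw [hh]
    rw [integral_sub (((integrable_const (1:ℝ)).indicator hUm).const_mul δ)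
      (((integrable_const (1:ℝ)).indicator (hUm.inter hVm)).const_mul ε)]
    rw [integral_const_mul, integral_const_mul,
      integral_indicator_const (1:ℝ) hUm, integral_indicator_const (1:ℝ) (hUm.inter hVm)]
    simp [mul_comm, Measure.real]
  -- measure computations
  have hπU : πbar U = μ S := by
    rw [← hπbarX, Measure.map_apply measurable_fst hS]
  have hprod : U ∩ V = S ×ˢ (T ×ˢ (univ : Set ℝ)) := by
    ext q
    simp [hU, hV, Set.mem_prod, and_comm]
  have hπUV : ENNReal.ofReal (Real.exp (-Cp)) * (μ S * ν T) ≤ πbar (U ∩ V) := by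
    rw [hprod, hπbar, withDensity_apply _ (hS.prod (hT.prod MeasurableSet.univ))]
    have hae : ∀ᵐ q ∂(μ.prod (ν.prod ρ)),
        ENNReal.ofReal (Real.exp (-Cp)) ≤ ENNReal.ofReal (Real.exp (-pbar q)) := by
      filter_upwards [hpb] with q hq
      exact ENNReal.ofReal_le_ofReal (Real.exp_le_exp.2 (by linarith [abs_le.1 hq]))
    calc ENNReal.ofReal (Real.exp (-Cp)) * (μ S * ν T)
        = ∫⁻ _ in S ×ˢ (T ×ˢ (univ : Set ℝ)), ENNReal.ofReal (Real.exp (-Cp))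
            ∂(μ.prod (ν.prod ρ)) := by
          rw [MeasureTheory.setLIntegral_const, Measure.prod_prod, Measure.prod_prod]
          simp [mul_assoc]
      _ ≤ _ := lintegral_mono_ae (ae_restrict_of_ae hae)
  -- final arithmetic
  have hμSfin : μ S ≠ ⊤ := (measure_lt_top μ S).ne
  have hm : 0 < (μ S).toReal := ENNReal.toReal_pos hμS.ne' hμSfin
  have hUVfin : πbar (U ∩ V) ≠ ⊤ := (measure_lt_top _ _).ne
  have hlow : Real.exp (-Cp) * ((μ S).toReal * (ν T).toReal) ≤ (πbar (U ∩ V)).toReal := by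
    have := ENNReal.toReal_mono hUVfin hπUV
    rwa [ENNReal.toReal_mul, ENNReal.toReal_mul,
      ENNReal.toReal_ofReal (Real.exp_nonneg _)] at this
  rw [hπU] at hle
  nlinarith [hle, hlow, hm, hε, hδε, Real.exp_pos (-Cp), ENNReal.toReal_nonneg (a := ν T)]

lemma eq_dirac_of_singleton (m : Measure ℝ) [IsProbabilityMeasure m] {c : ℝ}
    (h : m {c} = 1) : m = Measure.dirac c := by
  ext s hs
  rw [Measure.dirac_apply' _ hs]
  by_cases hc : c ∈ s
  · rw [Set.indicator_of_mem hc]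
    refine le_antisymm prob_le_one ?_
    calc (1 : ENNReal) = m {c} := h.symm
      _ ≤ m s := measure_mono (Set.singleton_subset_iff.2 hc)
  · rw [Set.indicator_of_notMem hc]
    have hsub : s ⊆ ({c} : Set ℝ)ᶜ := by
      intro x hx hxc
      rw [Set.mem_singleton_iff] at hxc
      exact hc (hxc ▸ hx)
    have h0 : m ({c} : Set ℝ)ᶜ = 0 := by
      rw [measure_compl (measurableSet_singleton c) (measure_ne_top m _), h, measure_univ]
      simp
    exact measure_mono_null hsub h0

theorem stmt_3
    (μ ν ρ : Measure ℝ)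
    [IsProbabilityMeasure μ] [IsProbabilityMeasure ν] [IsProbabilityMeasure ρ]
    (hμc : IsCompact (msupp μ)) (hνc : IsCompact (msupp ν))
    (hνnd : ∀ y₀ : ℝ, ν ≠ Measure.dirac y₀)
    (pbar : ℝ × ℝ × ℝ → ℝ) (Cp : ℝ) (hpm : Measurable pbar)
    (hpb : ∀ᵐ q ∂(μ.prod (ν.prod ρ)), |pbar q| ≤ Cp)
    (πbar : Measure (ℝ × ℝ × ℝ)) [IsProbabilityMeasure πbar]
    (hπbar : πbar = (μ.prod (ν.prod ρ)).withDensity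
        (fun q => ENNReal.ofReal (Real.exp (-pbar q))))
    (hπbarX : πbar.map Prod.fst = μ) (hπbarY : πbar.map (fun q => q.2.1) = ν)
    (hπbarM : ∀ᵐ x ∂μ, ∫ q : ℝ × ℝ, (q.1 - x) ∂(πbar.condKernel x) = 0) :
    sSup (msupp μ) < sSup (msupp ν) ∧ sInf (msupp ν) < sInf (msupp μ) := by
  have hμcl := msupp_closed μ
  have hνcl := msupp_closed ν
  have hμne := msupp_nonempty μ
  have hνne := msupp_nonempty ν
  set a := sSup (msupp μ) with ha_def
  set b := sSup (msupp ν) with hb_def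
  set a' := sInf (msupp μ) with ha'_def
  set b' := sInf (msupp ν) with hb'_def
  have haμ : a ∈ msupp μ := hμc.sSup_mem hμne
  have hbν : b ∈ msupp ν := hνc.sSup_mem hνne
  have ha'μ : a' ∈ msupp μ := hμc.sInf_mem hμne
  have hb'ν : b' ∈ msupp ν := hνc.sInf_mem hνne
  have hsubμ : ∀ x ∈ msupp μ, a' ≤ x ∧ x ≤ a := fun x hx =>
    ⟨csInf_le hμc.bddBelow hx, le_csSup hμc.bddAbove hx⟩
  have hsubν : ∀ x ∈ msupp ν, b' ≤ x ∧ x ≤ b := fun x hx =>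
    ⟨csInf_le hνc.bddBelow hx, le_csSup hνc.bddAbove hx⟩
  -- a.e. membership of coordinates under πbar
  have hXmem : ∀ᵐ q ∂πbar, q.1 ∈ msupp μ := by
    rw [ae_iff]
    have hset : {q : ℝ × ℝ × ℝ | ¬ q.1 ∈ msupp μ} = Prod.fst ⁻¹' (msupp μ)ᶜ := rfl
    rw [hset, ← Measure.map_apply measurable_fst hμcl.measurableSet.compl, hπbarX]
    exact msupp_compl_null μ
  have hYmem : ∀ᵐ q ∂πbar, q.2.1 ∈ msupp ν := by
    rw [ae_iff]
    have hset : {q : ℝ × ℝ × ℝ | ¬ q.2.1 ∈ msupp ν}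
        = (fun q : ℝ × ℝ × ℝ => q.2.1) ⁻¹' (msupp ν)ᶜ := rfl
    rw [hset, ← Measure.map_apply
      (show Measurable fun q : ℝ × ℝ × ℝ => q.2.1 from measurable_fst.comp measurable_snd)
      hνcl.measurableSet.compl, hπbarY]
    exact msupp_compl_null ν
  -- boundedness
  obtain ⟨Mμ, hMμ⟩ := isBounded_iff_forall_norm_le.1 hμc.isBounded
  obtain ⟨Mν, hMν⟩ := isBounded_iff_forall_norm_le.1 hνc.isBounded
  have hM : ∀ᵐ q ∂πbar, |q.2.1 - q.1| ≤ Mν + Mμ := by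
    filter_upwards [hXmem, hYmem] with q h1 h2
    have b1 := hMμ _ h1
    have b2 := hMν _ h2
    rw [Real.norm_eq_abs] at b1 b2
    have habs : |q.2.1 - q.1| ≤ |q.2.1| + |q.1| := abs_sub _ _
    linarith
  -- ν is not concentrated at its sup nor at its inf
  have hεsup : ∃ ε > (0:ℝ), 0 < ν (Iic (b - ε)) := by
    by_contra hcon
    push_neg at hcon
    have hIio : ν (Iio b) = 0 := by
      have hsub : Iio b ⊆ ⋃ n : ℕ, Iic (b - 1 / (n + 1)) := by
        intro y hy
        obtain ⟨n, hn⟩ := exists_nat_one_div_lt (K := ℝ) (sub_pos.2 hy)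
        exact Set.mem_iUnion.2 ⟨n, by simp only [Set.mem_Iic]; push_cast at hn ⊢; linarith⟩
      refine measure_mono_null hsub (measure_iUnion_null fun n => ?_)
      have := hcon (1 / (n + 1)) (by positivity)
      exact nonpos_iff_eq_zero.1 this
    have h1 : ν (Iic b) = 1 := by
      have hcsub : (Iic b)ᶜ ⊆ (msupp ν)ᶜ := by
        intro x hx
        simp only [Set.mem_compl_iff, Set.mem_Iic, not_le] at hx ⊢
        exact fun hm => absurd (hsubν x hm).2 (not_le.2 hx)
      have h0 : ν (Iic b)ᶜ = 0 := measure_mono_null hcsub (msupp_compl_null ν)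
      have hadd := measure_add_measure_compl (μ := ν) (measurableSet_Iic : MeasurableSet (Iic b))
      rw [h0, add_zero, measure_univ] at hadd
      exact hadd
    have hsing : ν {b} = 1 := by
      have hdecomp : Iic b = Iio b ∪ {b} := (Iio_union_right).symm
      have hle : ν (Iic b) ≤ ν (Iio b) + ν {b} := hdecomp ▸ measure_union_le _ _
      rw [hIio, zero_add, h1] at hle
      exact le_antisymm prob_le_one hle
    exact hνnd b (eq_dirac_of_singleton ν hsing)
  have hεinf : ∃ ε > (0:ℝ), 0 < ν (Ici (b' + ε)) := by
    by_contra hcon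
    push_neg at hcon
    have hIoi : ν (Ioi b') = 0 := by
      have hsub : Ioi b' ⊆ ⋃ n : ℕ, Ici (b' + 1 / (n + 1)) := by
        intro y hy
        obtain ⟨n, hn⟩ := exists_nat_one_div_lt (K := ℝ) (sub_pos.2 hy)
        exact Set.mem_iUnion.2 ⟨n, by simp only [Set.mem_Ici]; push_cast at hn ⊢; linarith⟩
      refine measure_mono_null hsub (measure_iUnion_null fun n => ?_)
      have := hcon (1 / (n + 1)) (by positivity)
      exact nonpos_iff_eq_zero.1 this
    have h1 : ν (Ici b') = 1 := by
      have hcsub : (Ici b')ᶜ ⊆ (msupp ν)ᶜ := by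
        intro x hx
        simp only [Set.mem_compl_iff, Set.mem_Ici, not_le] at hx ⊢
        exact fun hm => absurd (hsubν x hm).1 (not_le.2 hx)
      have h0 : ν (Ici b')ᶜ = 0 := measure_mono_null hcsub (msupp_compl_null ν)
      have hadd := measure_add_measure_compl (μ := ν) (measurableSet_Ici : MeasurableSet (Ici b'))
      rw [h0, add_zero, measure_univ] at hadd
      exact hadd
    have hsing : ν {b'} = 1 := by
      have hdecomp : Ici b' = {b'} ∪ Ioi b' := by
        ext x; simp [Set.mem_Ici, le_iff_lt_or_eq, or_comm, eq_comm]
      have hle : ν (Ici b') ≤ ν {b'} + ν (Ioi b') := hdecomp ▸ measure_union_le _ _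
      rw [hIoi, add_zero, h1] at hle
      exact le_antisymm prob_le_one hle
    exact hνnd b' (eq_dirac_of_singleton ν hsing)
  constructor
  · -- sup inequality
    by_contra hab
    push_neg at hab  -- b ≤ a
    obtain ⟨ε, hε, hT⟩ := hεsup
    set T := Iic (b - ε) with hT_def
    set t := (ν T).toReal with ht_def
    have ht : 0 < t := ENNReal.toReal_pos hT.ne' (measure_ne_top ν _)
    set c := Real.exp (-Cp) with hc_def
    have hcpos : 0 < c := Real.exp_pos _
    set δ := ε * c * t / 2 with hδ_def
    have hδpos : 0 < δ := by positivity
    set S := Ioi (a - δ) with hS_def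
    have hμS : 0 < μ S := haμ _ (Ioi_mem_nhds (by linarith))
    have hbound : ∀ᵐ q ∂πbar, q.1 ∈ S →
        (1:ℝ) * (q.2.1 - q.1) ≤ δ - ε * T.indicator (fun _ => (1:ℝ)) q.2.1 := by
      filter_upwards [hXmem, hYmem] with q h1 h2 hqS
      have hx_le : q.1 ≤ a := (hsubμ _ h1).2
      have hy_le : q.2.1 ≤ b := (hsubν _ h2).2
      have hx_gt : a - δ < q.1 := hqS
      by_cases hyT : q.2.1 ∈ T
      · rw [Set.indicator_of_mem hyT]
        have hy' : q.2.1 ≤ b - ε := hyT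
        linarith
      · rw [Set.indicator_of_notMem hyT]
        linarith
    exact core_contradiction μ ν ρ pbar Cp hpb πbar hπbar hπbarX hπbarM (Mν + Mμ) hM
      S T measurableSet_Ioi measurableSet_Iic 1 δ ε (abs_one) hε hbound hμS
      (by rw [hδ_def]; linarith [mul_pos (mul_pos hε hcpos) ht])
  · -- inf inequality
    by_contra hab
    push_neg at hab  -- a' ≤ b'
    obtain ⟨ε, hε, hT⟩ := hεinf
    set T := Ici (b' + ε) with hT_def
    set t := (ν T).toReal with ht_def
    have ht : 0 < t := ENNReal.toReal_pos hT.ne' (measure_ne_top ν _)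
    set c := Real.exp (-Cp) with hc_def
    have hcpos : 0 < c := Real.exp_pos _
    set δ := ε * c * t / 2 with hδ_def
    have hδpos : 0 < δ := by positivity
    set S := Iio (a' + δ) with hS_def
    have hμS : 0 < μ S := ha'μ _ (Iio_mem_nhds (by linarith))
    have hbound : ∀ᵐ q ∂πbar, q.1 ∈ S →
        (-1:ℝ) * (q.2.1 - q.1) ≤ δ - ε * T.indicator (fun _ => (1:ℝ)) q.2.1 := by
      filter_upwards [hXmem, hYmem] with q h1 h2 hqS
      have hx_ge : a' ≤ q.1 := (hsubμ _ h1).1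
      have hy_ge : b' ≤ q.2.1 := (hsubν _ h2).1
      have hx_lt : q.1 < a' + δ := hqS
      by_cases hyT : q.2.1 ∈ T
      · rw [Set.indicator_of_mem hyT]
        have hy' : b' + ε ≤ q.2.1 := hyT
        linarith
      · rw [Set.indicator_of_notMem hyT]
        linarith
    exact core_contradiction μ ν ρ pbar Cp hpb πbar hπbar hπbarX hπbarM (Mν + Mμ) hM
      S T measurableSet_Iio measurableSet_Ici (-1) δ ε (by norm_num) hε hbound hμS
      (by rw [hδ_def]; linarith [mul_pos (mul_pos hε hcpos) ht])
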